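/- arXiv:math/0611112 — 2 statements merged into one kernel-verified Lean document; each statement's English description precedes it below -/
import Mathlib

section
/- Let a : ℝ^d → [0,∞) and K ≥ 0. The following are equivalent (possibly with a different constant): (i) for every unit vector l ∈ ℝ^d and η > 0, |δ_{η,l}a(x)| ≤ K(√(a(x)) + η) for all x; (ii) the function σ := √a is Lipschitz continuous with constant K. -/
/-- First-order finite difference `δ_{ν,l}φ(x) = (φ(x+νl) − φ(x))/ν`. -/
noncomputable def fdiff {E : Type*} [AddCommGroup E] [Module ℝ E]
    (ν : ℝ) (l : E) (φ : E → ℝ) (x : E) : ℝ :=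
  (φ (x + ν • l) - φ x) / ν

/-- For a nonnegative function `a`, the bound
`|δ_{η,l}a(x)| ≤ K(√(a x) + η)` for all unit vectors `l` and all `η > 0`
holds for some constant `K ≥ 0` if and only if `σ = √a` is Lipschitz
continuous with some constant (equivalence up to a change of the constant). -/
theorem stmt_4 {d : ℕ} (a : EuclideanSpace ℝ (Fin d) → ℝ) (ha : ∀ x, 0 ≤ a x) :
    (∃ K ≥ (0 : ℝ), ∀ l : EuclideanSpace ℝ (Fin d), ‖l‖ = 1 → ∀ η > (0 : ℝ), ∀ x,
        |fdiff η l a x| ≤ K * (Real.sqrt (a x) + η))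
      ↔ (∃ K : NNReal, LipschitzWith K fun x => Real.sqrt (a x)) := by
  constructor
  · rintro ⟨K, hK0, hK⟩
    set K₁ : ℝ := max K 1 with hK₁def
    have hK₁1 : (1 : ℝ) ≤ K₁ := le_max_right _ _
    have hK₁0 : (0 : ℝ) ≤ K₁ := le_trans zero_le_one hK₁1
    have hKK₁ : K ≤ K₁ := le_max_left _ _
    refine ⟨⟨K₁, hK₁0⟩, ?_⟩
    refine LipschitzWith.of_dist_le_mul ?_
    have key : ∀ x y, Real.sqrt (a y) ≤ Real.sqrt (a x) + K₁ * dist x y := by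
      intro x y
      rcases eq_or_ne x y with rfl | hxy
      · simp
      · set η : ℝ := ‖y - x‖ with hη
        have hη0 : 0 < η := by
          rw [hη]
          exact norm_pos_iff.mpr (sub_ne_zero.mpr hxy.symm)
        set l : EuclideanSpace ℝ (Fin d) := η⁻¹ • (y - x) with hl
        have hnl : ‖l‖ = 1 := by
          rw [hl, norm_smul, norm_inv, Real.norm_eq_abs, abs_of_pos hη0, ← hη]
          field_simp
        have hxl : x + η • l = y := by
          rw [hl, smul_smul, mul_inv_cancel₀ hη0.ne', one_smul]
          abel
        have h1 := hK l hnl η hη0 x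
        rw [fdiff, hxl] at h1
        have h2 : |a y - a x| ≤ K₁ * η * (Real.sqrt (a x) + η) := by
          rw [abs_div, abs_of_pos hη0, div_le_iff₀ hη0] at h1
          have hpos : 0 ≤ (Real.sqrt (a x) + η) * η := by positivity
          have := mul_le_mul_of_nonneg_right hKK₁ hpos
          nlinarith [h1]
        have hax : Real.sqrt (a x) ^ 2 = a x := Real.sq_sqrt (ha x)
        have h3 : a y ≤ (Real.sqrt (a x) + K₁ * η) ^ 2 := by
          nlinarith [Real.sqrt_nonneg (a x), abs_le.mp h2,
            mul_nonneg (mul_nonneg hK₁0 hη0.le) (Real.sqrt_nonneg (a x)),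
            mul_nonneg (mul_nonneg hK₁0 (sub_nonneg.2 hK₁1)) (mul_nonneg hη0.le hη0.le)]
        have h4 : Real.sqrt (a y) ≤ Real.sqrt (a x) + K₁ * η := by
          have h5 := Real.sqrt_le_sqrt h3
          rwa [Real.sqrt_sq (by positivity)] at h5
        have hd : dist x y = η := by rw [dist_eq_norm, hη, norm_sub_rev]
        rw [hd]
        exact h4
    intro x y
    rw [Real.dist_eq, abs_le]
    have k1 := key x y
    have k2 := key y x
    rw [dist_comm] at k2
    show -(K₁ * dist x y) ≤ _ ∧ _ ≤ K₁ * dist x y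
    constructor <;> linarith
  · rintro ⟨K, hK⟩
    refine ⟨2 * K + K * K, by positivity, ?_⟩
    intro l hl η hη x
    have hd : dist (x + η • l) x = η := by
      rw [dist_eq_norm]
      simp [norm_smul, hl, abs_of_pos hη]
    have h1 := hK.dist_le_mul (x + η • l) x
    rw [hd, Real.dist_eq] at h1
    have hs := Real.sqrt_nonneg (a x)
    have ht := Real.sqrt_nonneg (a (x + η • l))
    have hax : Real.sqrt (a x) ^ 2 = a x := Real.sq_sqrt (ha x)
    have hay : Real.sqrt (a (x + η • l)) ^ 2 = a (x + η • l) := Real.sq_sqrt (ha _)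
    rw [fdiff, abs_div, abs_of_pos hη, div_le_iff₀ hη]
    have h2 := abs_le.mp h1
    rw [abs_le]
    have hKnn : (0 : ℝ) ≤ K := K.coe_nonneg
    have hKη : (0:ℝ) ≤ (K:ℝ) * η := mul_nonneg hKnn hη.le
    have e1 : (Real.sqrt (a (x + η • l)) - Real.sqrt (a x)) * (Real.sqrt (a (x + η • l)) + Real.sqrt (a x))
        ≤ ((K:ℝ) * η) * (Real.sqrt (a (x + η • l)) + Real.sqrt (a x)) :=
      mul_le_mul_of_nonneg_right h2.2 (add_nonneg ht hs)
    have e1' : (Real.sqrt (a x) - Real.sqrt (a (x + η • l))) * (Real.sqrt (a (x + η • l)) + Real.sqrt (a x))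
        ≤ ((K:ℝ) * η) * (Real.sqrt (a (x + η • l)) + Real.sqrt (a x)) :=
      mul_le_mul_of_nonneg_right (by linarith [h2.1]) (add_nonneg ht hs)
    have e2 : ((K:ℝ) * η) * Real.sqrt (a (x + η • l)) ≤ ((K:ℝ) * η) * (Real.sqrt (a x) + (K:ℝ) * η) :=
      mul_le_mul_of_nonneg_left (by linarith [h2.2]) hKη
    constructor <;>
      nlinarith [e1, e1', e2, mul_nonneg hKnn (mul_nonneg hη.le hη.le),
        mul_nonneg (mul_nonneg hKnn hKnn) (mul_nonneg hs hη.le), mul_nonneg hKη hs]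
end

section
/- Let d₁ ≥ 1, ε > 0 satisfy ε⁻¹ − 2εd₁ = 1, and let h_i > 0 and ℓ_i ∈ ℝ^d for i = ±1,…,±d₁ with ℓ_{−i} = −ℓ_i and h_{−i} = h_i. Let φ : ℝ^d → ℝ satisfy max_i |δ_i φ(x)| ≤ max_i |δ_i φ(0)| for all x ∈ {h_iℓ_i : i = ±1,…,±d₁}, where δ_iφ(x) = (φ(x+h_iℓ_i) − φ(x))/h_i. Then max_i |δ_i φ(0)| ≤ max{ (Σ_i γ_i δ_i φ(x))⁻ : γ_i ∈ [ε, ε⁻¹] for all i, x ∈ {0} ∪ {h_jℓ_j : j} }. -/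
/-- Negative part `a⁻ = max(−a, 0)`. -/
def npart (a : ℝ) : ℝ := max (-a) 0

/-- The signed index set `{±1, …, ±d₁}` as a finite set of integers. -/
noncomputable def signedIdx (d₁ : ℕ) : Finset ℤ := (Finset.Icc (-(d₁ : ℤ)) d₁).erase 0

lemma mem_signedIdx {d₁ : ℕ} {i : ℤ} :
    i ∈ signedIdx d₁ ↔ i ≠ 0 ∧ -(d₁ : ℤ) ≤ i ∧ i ≤ d₁ := by
  simp [signedIdx, Finset.mem_erase, Finset.mem_Icc, and_assoc]

lemma neg_mem_signedIdx {d₁ : ℕ} {i : ℤ} (h : i ∈ signedIdx d₁) :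
    -i ∈ signedIdx d₁ := by
  rw [mem_signedIdx] at h ⊢; omega

lemma card_signedIdx (d₁ : ℕ) : (signedIdx d₁).card = 2 * d₁ := by
  rw [signedIdx, Finset.card_erase_of_mem (by simp [Finset.mem_Icc]), Int.card_Icc]
  omega

/-- Lemma 9.8.1 of the paper: if `max_i |δ_i φ(x)| ≤ max_i |δ_i φ(0)|` for all
`x ∈ {h_iℓ_i}`, then `max_i |δ_i φ(0)|` is dominated by the maximum of
`(Σ_i γ_i δ_i φ(x))⁻` over `γ ∈ Γ = [ε, ε⁻¹]^{±1,…,±d₁}` and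
`x ∈ {0} ∪ {h_jℓ_j}`; the maximum is expressed by exhibiting maximizers. -/
theorem stmt_8 {d d₁ : ℕ} (hd₁ : 1 ≤ d₁) (ε : ℝ) (hε : 0 < ε)
    (hεe : ε⁻¹ - 2 * ε * d₁ = 1)
    (hstep : ℤ → ℝ) (ℓ : ℤ → Fin d → ℝ)
    (hpos : ∀ i, 0 < hstep i) (hsymℓ : ∀ i, ℓ (-i) = -ℓ i)
    (hsymh : ∀ i, hstep (-i) = hstep i)
    (φ : (Fin d → ℝ) → ℝ)
    (hhyp : ∀ j ∈ signedIdx d₁, ∀ i ∈ signedIdx d₁, ∃ i' ∈ signedIdx d₁,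
      |fdiff (hstep i) (ℓ i) φ (hstep j • ℓ j)| ≤ |fdiff (hstep i') (ℓ i') φ 0|) :
    ∃ γ : ℤ → ℝ, (∀ i ∈ signedIdx d₁, ε ≤ γ i ∧ γ i ≤ ε⁻¹) ∧
      ∃ x ∈ insert (0 : Fin d → ℝ) ((signedIdx d₁).image fun j => hstep j • ℓ j),
        ∀ i ∈ signedIdx d₁,
          |fdiff (hstep i) (ℓ i) φ 0|
            ≤ npart (∑ j ∈ signedIdx d₁, γ j * fdiff (hstep j) (ℓ j) φ x) := by
  classical
  set S := signedIdx d₁ with hS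
  have hSne : S.Nonempty := ⟨1, by rw [hS, mem_signedIdx]; omega⟩
  set f0 : ℤ → ℝ := fun i => |fdiff (hstep i) (ℓ i) φ 0| with hf0
  obtain ⟨i₀, hi₀, hmax⟩ := S.exists_mem_eq_sup' hSne f0
  set M := S.sup' hSne f0 with hM
  have hMle : ∀ i ∈ S, f0 i ≤ M := fun i hi => Finset.le_sup' f0 hi
  have hM0 : 0 ≤ M := le_trans (abs_nonneg _) (hMle i₀ hi₀)
  have hεinv : ε * ε⁻¹ = 1 := mul_inv_cancel₀ (ne_of_gt hε)
  have hd0 : (0 : ℝ) ≤ (d₁ : ℝ) := Nat.cast_nonneg d₁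
  have hinv1 : (1 : ℝ) ≤ ε⁻¹ := by nlinarith [mul_nonneg hε.le hd0]
  have hε1 : ε ≤ 1 := by nlinarith
  -- find special index and point
  obtain ⟨i₁, hi₁, x, hx, hfx, hbd⟩ :
      ∃ i₁ ∈ S, ∃ x ∈ insert (0 : Fin d → ℝ) (S.image fun j => hstep j • ℓ j),
        fdiff (hstep i₁) (ℓ i₁) φ x = -M ∧
        ∀ j ∈ S, |fdiff (hstep j) (ℓ j) φ x| ≤ M := by
    rcases le_or_gt (fdiff (hstep i₀) (ℓ i₀) φ 0) 0 with h | h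
    · refine ⟨i₀, hi₀, 0, Finset.mem_insert_self _ _, ?_, fun j hj => hMle j hj⟩
      have : M = -(fdiff (hstep i₀) (ℓ i₀) φ 0) := by
        rw [hmax]; simp [hf0, abs_of_nonpos h]
      linarith
    · refine ⟨-i₀, neg_mem_signedIdx hi₀, hstep i₀ • ℓ i₀,
        Finset.mem_insert_of_mem (Finset.mem_image_of_mem _ hi₀), ?_, ?_⟩
      · have hMa : M = fdiff (hstep i₀) (ℓ i₀) φ 0 := by
          rw [hmax]; simp [hf0, abs_of_pos h]
        have hne : hstep i₀ ≠ 0 := ne_of_gt (hpos i₀)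
        rw [hMa]
        simp only [fdiff, hsymh, hsymℓ, smul_neg]
        rw [add_neg_cancel]
        field_simp
        rw [zero_add]; ring
      · intro j hj
        obtain ⟨i', hi', hle⟩ := hhyp i₀ hi₀ j hj
        exact hle.trans (hMle i' hi')
  refine ⟨fun j => if j = i₁ then ε⁻¹ else ε, ?_, x, hx, ?_⟩
  · intro i _
    by_cases hii : i = i₁
    · simp only [hii, if_pos rfl]
      exact ⟨le_trans hε1 hinv1, le_refl _⟩
    · simp only [if_neg hii]
      exact ⟨le_refl _, le_trans hε1 hinv1⟩
  · intro i hi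
    have hsum : ∑ j ∈ S, (if j = i₁ then ε⁻¹ else ε) * fdiff (hstep j) (ℓ j) φ x ≤ -M := by
      rw [← Finset.add_sum_erase S _ hi₁]
      simp only [if_pos rfl, if_true, eq_self_iff_true, hfx]
      have hcard : (S.erase i₁).card = 2 * d₁ - 1 := by
        rw [Finset.card_erase_of_mem hi₁, hS, card_signedIdx]
      have h1 : ∑ j ∈ S.erase i₁, (if j = i₁ then ε⁻¹ else ε) * fdiff (hstep j) (ℓ j) φ x
          ≤ (2 * (d₁ : ℝ) - 1) * (ε * M) := by
        calc ∑ j ∈ S.erase i₁, (if j = i₁ then ε⁻¹ else ε) * fdiff (hstep j) (ℓ j) φ x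
            ≤ ∑ _j ∈ S.erase i₁, ε * M := by
              apply Finset.sum_le_sum
              intro j hj
              rw [if_neg (Finset.ne_of_mem_erase hj)]
              have hb := hbd j (Finset.mem_of_mem_erase hj)
              have := le_abs_self (fdiff (hstep j) (ℓ j) φ x)
              nlinarith
          _ = (2 * (d₁ : ℝ) - 1) * (ε * M) := by
              rw [Finset.sum_const, hcard, nsmul_eq_mul]
              have : ((2 * d₁ - 1 : ℕ) : ℝ) = 2 * (d₁ : ℝ) - 1 := by
                have : 1 ≤ 2 * d₁ := by omega
                push_cast [this]
                ring
              rw [this]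
      have hεd : ε⁻¹ = 1 + 2 * ε * d₁ := by linarith
      nlinarith [mul_nonneg hε.le hM0]
    have h2 : f0 i ≤ M := hMle i hi
    have h3 : M ≤ npart (∑ j ∈ S, (if j = i₁ then ε⁻¹ else ε) * fdiff (hstep j) (ℓ j) φ x) := by
      unfold npart
      calc M ≤ -(∑ j ∈ S, (if j = i₁ then ε⁻¹ else ε) * fdiff (hstep j) (ℓ j) φ x) := by
            linarith
        _ ≤ _ := le_max_left _ _
    exact le_trans h2 h3
end
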